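/- Fix ε, δ ∈ (0,1), observables o_1,…,o_L, and measurements P = [p_1,…,p_M]. If the confidence bound Conf_ε(O;P) := ∑_{ℓ=1}^L exp(−(ε²/2)·h(o_ℓ;P)) satisfies Conf_ε(O;P) ≤ δ/2, then with probability at least 1 − δ, the empirical averages satisfy |ω̂_ℓ − ω_ℓ| ≤ ε simultaneously for all 1 ≤ ℓ ≤ L. -/

import Mathlib

inductive Pauli | I | X | Y | Z
deriving DecidableEq

instance instFintypePauli : Fintype Pauli :=
  Fintype.ofList [Pauli.I, Pauli.X, Pauli.Y, Pauli.Z] (by intro x; cases x <;> simp)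

inductive Axis | X | Y | Z
deriving DecidableEq

instance instFintypeAxis : Fintype Axis :=
  Fintype.ofList [Axis.X, Axis.Y, Axis.Z] (by intro x; cases x <;> simp)

def Axis.toPauli : Axis → Pauli
  | .X => .X
  | .Y => .Y
  | .Z => .Z

/-- single-qubit hitting relation: `o = I` or `o = p`. -/
def hit1 (o : Pauli) (p : Axis) : Prop := o = Pauli.I ∨ o = p.toPauli

instance (o : Pauli) (p : Axis) : Decidable (hit1 o p) := by unfold hit1; infer_instance

/-- `o ▷ p`: every coordinate of `o` is `I` or matches `p`. -/
def hits {n : ℕ} (o : Fin n → Pauli) (p : Fin n → Axis) : Prop := ∀ k, hit1 (o k) (p k)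

instance {n : ℕ} (o : Fin n → Pauli) (p : Fin n → Axis) : Decidable (hits o p) := by
  unfold hits; infer_instance

/-- weight: number of non-identity coordinates. -/
def weight {n : ℕ} (o : Fin n → Pauli) : ℕ :=
  (Finset.univ.filter (fun k => o k ≠ Pauli.I)).card

/-- hitting count of `o` among the measurements `P`. -/
def hitCount {n M : ℕ} (o : Fin n → Pauli) (P : Fin M → Fin n → Axis) : ℕ :=
  (Finset.univ.filter (fun m => hits o (P m))).card

/-- the confidence bound. -/
noncomputable def Conf {n M L : ℕ} (ε : ℝ) (O : Fin L → Fin n → Pauli)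
    (P : Fin M → Fin n → Axis) : ℝ :=
  ∑ ℓ, Real.exp (-(ε ^ 2 / 2) * (hitCount (O ℓ) P))

open MeasureTheory ProbabilityTheory


private lemma aux_nonneg_of_deriv {f f' : ℝ → ℝ} (hf0 : f 0 = 0)
    (hd : ∀ t ∈ Set.Ici (0:ℝ), HasDerivAt f (f' t) t)
    (h' : ∀ t ∈ Set.Ici (0:ℝ), 0 ≤ f' t) :
    ∀ t, 0 ≤ t → 0 ≤ f t := by
  intro t ht
  have hmono : MonotoneOn f (Set.Ici (0:ℝ)) := by
    apply monotoneOn_of_deriv_nonneg (convex_Ici 0)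
    · intro x hx; exact (hd x hx).continuousAt.continuousWithinAt
    · intro x hx
      rw [interior_Ici] at hx
      exact (hd x (Set.mem_Ici.mpr (le_of_lt hx))).differentiableAt.differentiableWithinAt
    · intro x hx
      rw [interior_Ici] at hx
      rw [(hd x (Set.mem_Ici.mpr (le_of_lt hx))).deriv]
      exact h' x (Set.mem_Ici.mpr (le_of_lt hx))
  have := hmono Set.self_mem_Ici (Set.mem_Ici.mpr ht) ht
  rwa [hf0] at this

private lemma aux_mgf_key {w : ℝ} (hw : |w| ≤ 1) {t : ℝ} (ht : 0 ≤ t) :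
    Real.cosh t + w * Real.sinh t ≤ Real.exp (w * t + t ^ 2 / 2) := by
  obtain ⟨hw1, hw2⟩ := abs_le.mp hw
  set c : ℝ → ℝ := fun u => Real.cosh u + w * Real.sinh u with hc
  set d : ℝ → ℝ := fun u => Real.sinh u + w * Real.cosh u with hd
  have hcpos : ∀ u ∈ Set.Ici (0:ℝ), 0 < c u := by
    intro u hu
    have h1 : Real.cosh u - Real.sinh u = Real.exp (-u) := Real.cosh_sub_sinh u
    have h2 : 0 ≤ Real.sinh u := Real.sinh_nonneg_iff.mpr hu
    have h3 : 0 < Real.exp (-u) := Real.exp_pos _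
    simp only [hc]
    nlinarith
  have hcd : ∀ u, HasDerivAt c (d u) u := fun u =>
    (Real.hasDerivAt_cosh u).add ((Real.hasDerivAt_sinh u).const_mul w)
  have hdd : ∀ u, HasDerivAt d (c u) u := fun u =>
    (Real.hasDerivAt_sinh u).add ((Real.hasDerivAt_cosh u).const_mul w)
  set Fd : ℝ → ℝ := fun u => w + u - d u / c u with hFd
  have hFd0 : Fd 0 = 0 := by
    simp [hFd, hd, hc, Real.sinh_zero, Real.cosh_zero]
  have hFdnn : ∀ u, 0 ≤ u → 0 ≤ Fd u := by
    apply aux_nonneg_of_deriv (f' := fun u => 1 - (c u * c u - d u * d u) / (c u)^2) hFd0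
    · intro u hu
      have h1 : HasDerivAt (fun v => d v / c v) ((c u * c u - d u * d u) / (c u)^2) u :=
        (hdd u).div (hcd u) (hcpos u hu).ne'
      have h2 : HasDerivAt (fun v : ℝ => w + v) 1 u := (hasDerivAt_id u).const_add w
      exact h2.sub h1
    · intro u hu
      have hcu := hcpos u hu
      have : 1 - (c u * c u - d u * d u) / (c u)^2 = (d u)^2 / (c u)^2 := by
        field_simp
        ring
      rw [this]
      positivity
  set F : ℝ → ℝ := fun u => w * u + u^2/2 - Real.log (c u) with hF
  have hF0 : F 0 = 0 := by
    simp [hF, hc, Real.sinh_zero, Real.cosh_zero]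
  have hFnn : ∀ u, 0 ≤ u → 0 ≤ F u := by
    apply aux_nonneg_of_deriv (f' := Fd) hF0
    · intro u hu
      have h1 : HasDerivAt (fun v => Real.log (c v)) (d u / c u) u :=
        (hcd u).log (hcpos u hu).ne'
      have h2 : HasDerivAt (fun v : ℝ => w * v + v^2/2) (w + u) u := by
        have h3 := ((hasDerivAt_id u).const_mul w).add ((hasDerivAt_pow 2 u).div_const 2)
        exact h3.congr_deriv (by norm_num)
      exact h2.sub h1
    · intro u hu; exact hFdnn u hu
  have hct : 0 < c t := hcpos t ht
  have hFt := hFnn t ht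
  have hlog : Real.log (c t) ≤ w * t + t^2/2 := by
    simp only [hF] at hFt; linarith
  calc Real.cosh t + w * Real.sinh t = Real.exp (Real.log (c t)) := (Real.exp_log hct).symm
    _ ≤ Real.exp (w * t + t ^ 2 / 2) := Real.exp_le_exp.mpr hlog

private lemma aux_chernoff {Ω : Type*} [MeasurableSpace Ω] (μ : Measure Ω) [IsProbabilityMeasure μ]
    {M : ℕ} (s : Fin M → Ω → ℝ) (hmeas : ∀ m, Measurable (s m))
    (hind : iIndepFun s μ)
    (hval : ∀ m x, s m x = 1 ∨ s m x = -1)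
    {ω : ℝ} (hω : |ω| ≤ 1) {ε : ℝ} (hε : 0 < ε) (S : Finset (Fin M))
    (hmean : ∀ m ∈ S, (∫ x, s m x ∂μ) = ω) :
    (μ {x | (S.card : ℝ) * (ω + ε) ≤ (∑ m ∈ S, s m) x}).toReal ≤
      Real.exp (-(ε ^ 2 / 2) * S.card) ∧
    (μ {x | (∑ m ∈ S, s m) x ≤ (S.card : ℝ) * (ω - ε)}).toReal ≤
      Real.exp (-(ε ^ 2 / 2) * S.card) := by
  have hexp_eq : ∀ (t : ℝ) m, (fun x => Real.exp (t * s m x)) =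
      fun x => Real.cosh t + s m x * Real.sinh t := by
    intro t m
    funext x
    rcases hval m x with h | h
    · rw [h, mul_one, one_mul, Real.cosh_add_sinh]
    · rw [h, mul_neg_one]
      rw [show Real.exp (-t) = Real.cosh t - Real.sinh t from (Real.cosh_sub_sinh t).symm]
      ring
  have int_s : ∀ m, Integrable (s m) μ := by
    intro m
    refine (integrable_const (1:ℝ)).mono' (hmeas m).aestronglyMeasurable ?_
    filter_upwards with x
    rcases hval m x with h | h <;> rw [h] <;> norm_num
  have h_int : ∀ (t : ℝ) m, Integrable (fun x => Real.exp (t * s m x)) μ := by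
    intro t m
    rw [hexp_eq]
    exact (integrable_const _).add ((int_s m).mul_const _)
  have hmgf : ∀ (t : ℝ), ∀ m ∈ S, mgf (s m) μ t = Real.cosh t + ω * Real.sinh t := by
    intro t m hm
    have : mgf (s m) μ t = ∫ x, Real.exp (t * s m x) ∂μ := rfl
    rw [this, hexp_eq]
    rw [integral_add (integrable_const _) ((int_s m).mul_const _), integral_const,
      integral_mul_const, hmean m hm]
    simp [measure_univ]
  have hbase : ∀ (w t : ℝ), |w| ≤ 1 → 0 ≤ Real.cosh t + w * Real.sinh t := by
    intro w t hw
    obtain ⟨hw1, hw2⟩ := abs_le.mp hw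
    have h1 : 0 ≤ (1 + w) * Real.exp t := mul_nonneg (by linarith) (Real.exp_pos t).le
    have h2 : 0 ≤ (1 - w) * Real.exp (-t) := mul_nonneg (by linarith) (Real.exp_pos (-t)).le
    rw [← Real.cosh_add_sinh] at h1
    rw [← Real.cosh_sub_sinh] at h2
    nlinarith
  constructor
  · have hU := measure_ge_le_exp_mul_mgf (μ := μ) (X := ∑ m ∈ S, s m) (t := ε)
      ((S.card : ℝ) * (ω + ε)) hε.le
      (hind.integrable_exp_mul_sum hmeas (fun m _ => h_int ε m))
    have hprod : mgf (∑ m ∈ S, s m) μ ε = (Real.cosh ε + ω * Real.sinh ε) ^ S.card := by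
      rw [hind.mgf_sum hmeas S, Finset.prod_congr rfl (fun m hm => hmgf ε m hm),
        Finset.prod_const]
    rw [hprod] at hU
    refine hU.trans ?_
    have hpow : (Real.cosh ε + ω * Real.sinh ε) ^ S.card ≤
        Real.exp (ω * ε + ε ^ 2 / 2) ^ S.card :=
      pow_le_pow_left₀ (hbase ω ε hω) (aux_mgf_key hω hε.le) _
    calc Real.exp (-ε * ((S.card : ℝ) * (ω + ε))) * (Real.cosh ε + ω * Real.sinh ε) ^ S.card
        ≤ Real.exp (-ε * ((S.card : ℝ) * (ω + ε))) * Real.exp (ω * ε + ε ^ 2 / 2) ^ S.card := by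
          apply mul_le_mul_of_nonneg_left hpow (Real.exp_pos _).le
      _ = Real.exp (-(ε ^ 2 / 2) * S.card) := by
          rw [← Real.exp_nat_mul, ← Real.exp_add]
          congr 1
          ring
  · have hL := measure_le_le_exp_mul_mgf (μ := μ) (X := ∑ m ∈ S, s m) (t := -ε)
      ((S.card : ℝ) * (ω - ε)) (neg_nonpos.mpr hε.le)
      (hind.integrable_exp_mul_sum hmeas (fun m _ => h_int (-ε) m))
    have hmgf' : ∀ m ∈ S, mgf (s m) μ (-ε) = Real.cosh ε + (-ω) * Real.sinh ε := by
      intro m hm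
      rw [hmgf (-ε) m hm, Real.cosh_neg, Real.sinh_neg]
      ring
    have hprod : mgf (∑ m ∈ S, s m) μ (-ε) = (Real.cosh ε + (-ω) * Real.sinh ε) ^ S.card := by
      rw [hind.mgf_sum hmeas S, Finset.prod_congr rfl hmgf', Finset.prod_const]
    rw [hprod] at hL
    refine hL.trans ?_
    have hω' : |(-ω)| ≤ 1 := by rwa [abs_neg]
    have hpow : (Real.cosh ε + (-ω) * Real.sinh ε) ^ S.card ≤
        Real.exp ((-ω) * ε + ε ^ 2 / 2) ^ S.card :=
      pow_le_pow_left₀ (hbase (-ω) ε hω') (aux_mgf_key hω' hε.le) _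
    calc Real.exp (-(-ε) * ((S.card : ℝ) * (ω - ε))) * (Real.cosh ε + (-ω) * Real.sinh ε) ^ S.card
        ≤ Real.exp (-(-ε) * ((S.card : ℝ) * (ω - ε))) * Real.exp ((-ω) * ε + ε ^ 2 / 2) ^ S.card := by
          apply mul_le_mul_of_nonneg_left hpow (Real.exp_pos _).le
      _ = Real.exp (-(ε ^ 2 / 2) * S.card) := by
          rw [← Real.exp_nat_mul, ← Real.exp_add]
          congr 1
          ring

/-- if the confidence bound is at most `δ/2`, then with probability at least
`1 - δ` all `L` empirical averages are `ε`-accurate simultaneously. -/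
theorem stmt5 {Ω : Type*} [MeasurableSpace Ω] (μ : Measure Ω) [IsProbabilityMeasure μ]
    (n M L : ℕ) (O : Fin L → Fin n → Pauli) (P : Fin M → Fin n → Axis)
    (s : Fin L → Fin M → Ω → ℝ)
    (hmeas : ∀ ℓ m, Measurable (s ℓ m))
    (hind : ∀ ℓ, iIndepFun (s ℓ) μ)
    (hval : ∀ ℓ m x, s ℓ m x = 1 ∨ s ℓ m x = -1)
    (ω : Fin L → ℝ) (hω : ∀ ℓ, |ω ℓ| ≤ 1)
    (hmean : ∀ ℓ m, hits (O ℓ) (P m) → (∫ x, s ℓ m x ∂μ) = ω ℓ)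
    (ωhat : Fin L → Ω → ℝ)
    (hhat : ∀ ℓ x, ωhat ℓ x =
      if hitCount (O ℓ) P = 0 then 0
      else (∑ m ∈ Finset.univ.filter (fun m => hits (O ℓ) (P m)), s ℓ m x)
             / (hitCount (O ℓ) P : ℝ))
    (ε δ : ℝ) (hε : ε ∈ Set.Ioo (0 : ℝ) 1) (hδ : δ ∈ Set.Ioo (0 : ℝ) 1)
    (hconf : Conf ε O P ≤ δ / 2) :
    ENNReal.ofReal (1 - δ) ≤ μ {x | ∀ ℓ, |ωhat ℓ x - ω ℓ| ≤ ε} := by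
  obtain ⟨hε0, hε1⟩ := hε
  obtain ⟨hδ0, hδ1⟩ := hδ
  classical
  set S : Fin L → Finset (Fin M) :=
    fun ℓ => Finset.univ.filter (fun m => hits (O ℓ) (P m)) with hS
  have hcard : ∀ ℓ, (S ℓ).card = hitCount (O ℓ) P := fun ℓ => rfl
  have hhatmeas : ∀ ℓ, Measurable (ωhat ℓ) := by
    intro ℓ
    have heq : ωhat ℓ = fun x => if hitCount (O ℓ) P = 0 then (0:ℝ)
        else (∑ m ∈ S ℓ, s ℓ m x) / (hitCount (O ℓ) P : ℝ) := funext (hhat ℓ)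
    rw [heq]
    by_cases h : hitCount (O ℓ) P = 0
    · simp only [h, if_true]
      exact measurable_const
    · simp only [h, if_false]
      exact (Finset.measurable_sum _ (fun m _ => hmeas ℓ m)).div_const _
  set A : Fin L → Set Ω := fun ℓ => {x | ε < |ωhat ℓ x - ω ℓ|} with hA
  have hAmeas : ∀ ℓ, MeasurableSet (A ℓ) :=
    fun ℓ => measurableSet_lt measurable_const ((hhatmeas ℓ).sub measurable_const).abs
  have hAbound : ∀ ℓ,
      μ (A ℓ) ≤ ENNReal.ofReal (2 * Real.exp (-(ε ^ 2 / 2) * (hitCount (O ℓ) P))) := by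
    intro ℓ
    by_cases h0 : hitCount (O ℓ) P = 0
    · rw [h0]
      simp only [Nat.cast_zero, mul_zero, Real.exp_zero, mul_one]
      calc μ (A ℓ) ≤ 1 := prob_le_one
        _ ≤ ENNReal.ofReal 2 := ENNReal.one_le_ofReal.mpr (by norm_num)
    · have hcpos : (0:ℝ) < (hitCount (O ℓ) P : ℝ) :=
        Nat.cast_pos.mpr (Nat.pos_of_ne_zero h0)
      obtain ⟨hUp, hLo⟩ := aux_chernoff μ (s ℓ) (hmeas ℓ) (hind ℓ) (hval ℓ)
        (hω ℓ) hε0 (S ℓ)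
        (fun m hm => hmean ℓ m (by simpa [hS, Finset.mem_filter] using hm))
      set U : Set Ω := {x | ((S ℓ).card : ℝ) * (ω ℓ + ε) ≤ (∑ m ∈ S ℓ, s ℓ m) x} with hUdef
      set V : Set Ω := {x | (∑ m ∈ S ℓ, s ℓ m) x ≤ ((S ℓ).card : ℝ) * (ω ℓ - ε)} with hVdef
      have hsub : A ℓ ⊆ U ∪ V := by
        intro x hx
        simp only [hA, Set.mem_setOf_eq] at hx
        have hhatx : ωhat ℓ x = (∑ m ∈ S ℓ, s ℓ m x) / (hitCount (O ℓ) P : ℝ) := by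
          rw [hhat ℓ x, if_neg h0]
        have hsum : (∑ m ∈ S ℓ, s ℓ m) x = ∑ m ∈ S ℓ, s ℓ m x := by
          simp [Finset.sum_apply]
        rcases abs_cases (ωhat ℓ x - ω ℓ) with ⟨he, _⟩ | ⟨he, _⟩
        · left
          rw [he, hhatx] at hx
          simp only [hUdef, Set.mem_setOf_eq, hsum, hcard]
          have h3 : (ω ℓ + ε) * (hitCount (O ℓ) P : ℝ) < ∑ m ∈ S ℓ, s ℓ m x :=
            (lt_div_iff₀ hcpos).mp (by linarith)
          linarith
        · right
          rw [he, hhatx] at hx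
          simp only [hVdef, Set.mem_setOf_eq, hsum, hcard]
          have h3 : (∑ m ∈ S ℓ, s ℓ m x) < (ω ℓ - ε) * (hitCount (O ℓ) P : ℝ) :=
            (div_lt_iff₀ hcpos).mp (by linarith)
          linarith
      have hofU : μ U ≤ ENNReal.ofReal (Real.exp (-(ε ^ 2 / 2) * (hitCount (O ℓ) P))) := by
        rw [ENNReal.le_ofReal_iff_toReal_le (measure_ne_top μ _) (Real.exp_pos _).le]
        rw [← hcard]
        exact hUp
      have hofV : μ V ≤ ENNReal.ofReal (Real.exp (-(ε ^ 2 / 2) * (hitCount (O ℓ) P))) := by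
        rw [ENNReal.le_ofReal_iff_toReal_le (measure_ne_top μ _) (Real.exp_pos _).le]
        rw [← hcard]
        exact hLo
      calc μ (A ℓ) ≤ μ (U ∪ V) := measure_mono hsub
        _ ≤ μ U + μ V := measure_union_le U V
        _ ≤ ENNReal.ofReal (Real.exp (-(ε ^ 2 / 2) * (hitCount (O ℓ) P))) +
            ENNReal.ofReal (Real.exp (-(ε ^ 2 / 2) * (hitCount (O ℓ) P))) := add_le_add hofU hofV
        _ = ENNReal.ofReal (2 * Real.exp (-(ε ^ 2 / 2) * (hitCount (O ℓ) P))) := by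
            rw [← ENNReal.ofReal_add (Real.exp_pos _).le (Real.exp_pos _).le]
            congr 1
            ring
  have hbad : μ (⋃ ℓ, A ℓ) ≤ ENNReal.ofReal δ := by
    calc μ (⋃ ℓ, A ℓ) ≤ ∑ ℓ, μ (A ℓ) := measure_iUnion_fintype_le μ A
      _ ≤ ∑ ℓ, ENNReal.ofReal (2 * Real.exp (-(ε ^ 2 / 2) * (hitCount (O ℓ) P))) :=
          Finset.sum_le_sum (fun ℓ _ => hAbound ℓ)
      _ = ENNReal.ofReal (∑ ℓ, 2 * Real.exp (-(ε ^ 2 / 2) * (hitCount (O ℓ) P))) :=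
          (ENNReal.ofReal_sum_of_nonneg (fun ℓ _ => by positivity)).symm
      _ ≤ ENNReal.ofReal δ := by
          apply ENNReal.ofReal_le_ofReal
          have h2 : ∑ ℓ, 2 * Real.exp (-(ε ^ 2 / 2) * (hitCount (O ℓ) P)) =
              2 * Conf ε O P := by
            simp [Conf, Finset.mul_sum]
          rw [h2]
          linarith
  have hgood : {x | ∀ ℓ, |ωhat ℓ x - ω ℓ| ≤ ε} = (⋃ ℓ, A ℓ)ᶜ := by
    ext x
    simp [hA, Set.mem_iUnion, not_lt]
  rw [hgood]
  have hmeasU : MeasurableSet (⋃ ℓ, A ℓ) := MeasurableSet.iUnion (fun ℓ => hAmeas ℓ)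
  rw [measure_compl hmeasU (measure_ne_top μ _), measure_univ]
  calc ENNReal.ofReal (1 - δ) = 1 - ENNReal.ofReal δ := by
        rw [ENNReal.ofReal_sub _ hδ0.le, ENNReal.ofReal_one]
    _ ≤ 1 - μ (⋃ ℓ, A ℓ) := tsub_le_tsub_left hbad 1
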